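/- arXiv:2512.16932 — 2 statements merged into one kernel-verified Lean document; each statement's English description precedes it below -/
import Mathlib

section
/- Let α ∈ [0,1), and let G be a connected simple graph of even order n with minimum degree δ ≥ 2, where n ≥ 7δ−7 if α ∈ [0,1/2], n ≥ 8δ−8 if α ∈ (1/2,2/3], and n ≥ (3δ−3)/(1−α) if α ∈ (2/3,1). If ρ_α(G) ≥ ρ_α(K_δ ∨ (K_{n−2δ+1} ∪ (δ−1)K_1)), then G contains an even factor, unless G is isomorphic to K_δ ∨ (K_{n−2δ+1} ∪ (δ−1)K_1). -/
open Matrix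

/-- The cell (clique index) of a vertex of the join-of-cliques graph:
`none` for vertices of the central `K_s`, `some i` for vertices of `K_{parts i}`. -/
def cellOf {s t : ℕ} {parts : Fin t → ℕ} :
    (Fin s ⊕ (Σ i : Fin t, Fin (parts i))) → Option (Fin t)
  | Sum.inl _ => none
  | Sum.inr ⟨i, _⟩ => some i

/-- The graph `K_s ∨ (K_{parts 0} ∪ K_{parts 1} ∪ ⋯ ∪ K_{parts (t-1)})`. -/
def cliqueJoin (s : ℕ) {t : ℕ} (parts : Fin t → ℕ) :
    SimpleGraph (Fin s ⊕ (Σ i : Fin t, Fin (parts i))) where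
  Adj x y := x ≠ y ∧ (cellOf x = none ∨ cellOf y = none ∨ cellOf x = cellOf y)
  symm := ⟨by rintro x y ⟨h1, h2⟩; exact ⟨h1.symm, by tauto⟩⟩
  loopless := ⟨by rintro x ⟨h1, -⟩; exact h1 rfl⟩

/-- The `A_α`-matrix `A_α(G) = α D(G) + (1-α) A(G)`. -/
noncomputable def Aalpha {V : Type*} [Fintype V] (α : ℝ) (G : SimpleGraph V) :
    Matrix V V ℝ :=
  letI := Classical.decEq V
  letI := Classical.decRel G.Adj
  α • Matrix.diagonal (fun v => (G.degree v : ℝ)) + (1 - α) • (G.adjMatrix ℝ)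

/-- The largest real eigenvalue of a real matrix (for a real symmetric matrix,
this is its largest eigenvalue). -/
noncomputable def specRad {V : Type*} [Fintype V] (M : Matrix V V ℝ) : ℝ :=
  letI := Classical.decEq V
  sSup (spectrum ℝ M)

/-- The `A_α`-spectral radius of a graph. -/
noncomputable def rhoAlpha {V : Type*} [Fintype V] (α : ℝ) (G : SimpleGraph V) : ℝ :=
  specRad (Aalpha α G)

/-- `G` has an even factor: a spanning subgraph in which every vertex has positive
even degree. -/
def HasEvenFactor {V : Type*} [Fintype V] (G : SimpleGraph V) : Prop :=
  ∃ H : SimpleGraph V, H ≤ G ∧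
    ∀ v : V, 0 < (H.neighborSet v).ncard ∧ Even ((H.neighborSet v).ncard)

lemma cliqueJoin_adj (s : ℕ) {t : ℕ} (parts : Fin t → ℕ)
    (x y : Fin s ⊕ (Σ i : Fin t, Fin (parts i))) :
    (cliqueJoin s parts).Adj x y ↔
      x ≠ y ∧ (cellOf x = none ∨ cellOf y = none ∨ cellOf x = cellOf y) := Iff.rfl

abbrev pparts (n δ : ℕ) : Fin δ → ℕ := fun i => if (i : ℕ) = 0 then n - 2 * δ + 1 else 1
abbrev VXt (n δ : ℕ) := Fin δ ⊕ (Σ i : Fin δ, Fin (pparts n δ i))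

section Aux
open Finset

lemma degree_eq_degree {V : Type*} (G : SimpleGraph V) (v : V)
    (i1 i2 : Fintype (G.neighborSet v)) :
    @SimpleGraph.degree V G v i1 = @SimpleGraph.degree V G v i2 :=
  congrArg (fun i => @SimpleGraph.degree V G v i) (Subsingleton.elim i1 i2)

lemma aalpha_apply {V : Type*} [Fintype V] [DecidableEq V] (α : ℝ) (G : SimpleGraph V)
    [DecidableRel G.Adj] (i j : V) :
    Aalpha α G i j = α * (if i = j then (G.degree i : ℝ) else 0)
      + (1 - α) * (if G.Adj i j then 1 else 0) := by
  unfold Aalpha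
  simp only [Matrix.add_apply, Matrix.smul_apply, smul_eq_mul, Matrix.diagonal_apply,
    SimpleGraph.adjMatrix_apply]
  by_cases hij : i = j
  · subst hij
    simp only [if_pos rfl, SimpleGraph.irrefl, if_neg (G.irrefl), mul_zero, add_zero]
    exact congrArg (fun k : ℕ => α * (k:ℝ) + (1-α) * 0) (degree_eq_degree G i _ _)
  · by_cases hadj : G.Adj i j <;> simp [hij, hadj]

lemma aalpha_nonneg {V : Type*} [Fintype V] [DecidableEq V] {α : ℝ} (hα0 : 0 ≤ α) (hα1 : α ≤ 1)
    (G : SimpleGraph V) [DecidableRel G.Adj] (i j : V) : 0 ≤ Aalpha α G i j := by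
  rw [aalpha_apply]
  have h1 : (0:ℝ) ≤ (if i = j then (G.degree i : ℝ) else 0) := by positivity
  have h2 : (0:ℝ) ≤ (if G.Adj i j then (1:ℝ) else 0) := by positivity
  nlinarith

lemma aalpha_row_sum {V : Type*} [Fintype V] [DecidableEq V] (α : ℝ) (G : SimpleGraph V)
    [DecidableRel G.Adj] (i : V) :
    ∑ j, Aalpha α G i j = G.degree i := by
  simp only [aalpha_apply, Finset.sum_add_distrib, ← Finset.mul_sum]
  have h1 : ∑ j, (if i = j then (G.degree i : ℝ) else 0) = (G.degree i : ℝ) := by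
    simp
  have h2 : ∑ j, (if G.Adj i j then (1:ℝ) else 0) = (G.degree i : ℝ) := by
    rw [Finset.sum_ite, Finset.sum_const, Finset.sum_const]
    simp [SimpleGraph.degree, SimpleGraph.neighborFinset_eq_filter]
  rw [h1, h2]; ring

lemma spectrum_aalpha_le {V : Type*} [Fintype V] [DecidableEq V] {α : ℝ}
    (hα0 : 0 ≤ α) (hα1 : α ≤ 1)
    (G : SimpleGraph V) [DecidableRel G.Adj] {lam : ℝ}
    (h : lam ∈ spectrum ℝ (Aalpha α G)) : lam ≤ G.maxDegree := by
  set M := Aalpha α G with hMdef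
  rw [spectrum.mem_iff] at h
  have hdet : (algebraMap ℝ (Matrix V V ℝ) lam - M).det = 0 := by
    by_contra hd
    exact h ((Matrix.isUnit_iff_isUnit_det _).2 (isUnit_iff_ne_zero.2 hd))
  obtain ⟨v, hv0, hv⟩ := (Matrix.exists_mulVec_eq_zero_iff).2 hdet
  have hMv : M *ᵥ v = lam • v := by
    have h0 : (algebraMap ℝ (Matrix V V ℝ) lam) *ᵥ v - M *ᵥ v = 0 := by
      rw [← Matrix.sub_mulVec]; rw [hv]
    have h2 : (algebraMap ℝ (Matrix V V ℝ) lam) *ᵥ v = lam • v := by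
      funext x
      simp [Matrix.algebraMap_eq_diagonal, Matrix.mulVec_diagonal]
    rw [h2] at h0
    rw [sub_eq_zero] at h0
    exact h0.symm
  -- pick index with max |v i|
  have hne : (Finset.univ : Finset V).Nonempty := by
    obtain ⟨j, hj⟩ := Function.ne_iff.mp hv0
    exact ⟨j, Finset.mem_univ j⟩
  obtain ⟨i, -, hi⟩ := Finset.exists_max_image Finset.univ (fun k => |v k|) hne
  have hvi : 0 < |v i| := by
    obtain ⟨j, hj⟩ := Function.ne_iff.mp hv0
    have := hi j (Finset.mem_univ j)
    have hj' : 0 < |v j| := abs_pos.mpr hj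
    linarith
  have hrow : lam * v i = ∑ j, M i j * v j := by
    have := congrFun hMv i
    simpa [Matrix.mulVec, dotProduct, mul_comm] using this.symm
  have habs : |lam| * |v i| ≤ (G.degree i : ℝ) * |v i| := by
    calc |lam| * |v i| = |lam * v i| := (abs_mul _ _).symm
    _ = |∑ j, M i j * v j| := by rw [hrow]
    _ ≤ ∑ j, |M i j * v j| := Finset.abs_sum_le_sum_abs _ _
    _ ≤ ∑ j, M i j * |v i| := by
        apply Finset.sum_le_sum
        intro j _
        rw [abs_mul, abs_of_nonneg (aalpha_nonneg hα0 hα1 G i j)]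
        exact mul_le_mul_of_nonneg_left (hi j (Finset.mem_univ j))
          (aalpha_nonneg hα0 hα1 G i j)
    _ = (∑ j, M i j) * |v i| := by rw [Finset.sum_mul]
    _ = (G.degree i : ℝ) * |v i| := by rw [aalpha_row_sum]
  have hlam : |lam| ≤ (G.degree i : ℝ) := le_of_mul_le_mul_right habs hvi
  calc lam ≤ |lam| := le_abs_self lam
  _ ≤ (G.degree i : ℝ) := hlam
  _ ≤ (G.maxDegree : ℝ) := by exact_mod_cast G.degree_le_maxDegree i


lemma exists_spectrum_gt {V : Type*} [Fintype V] [DecidableEq V]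
    {M : Matrix V V ℝ} (hM : M.IsHermitian) (x : V → ℝ) (c : ℝ)
    (h : c * (x ⬝ᵥ x) < x ⬝ᵥ M *ᵥ x) : ∃ lam ∈ spectrum ℝ M, c < lam := by
  by_contra hcon
  push_neg at hcon
  have hle : ∀ i, hM.eigenvalues i ≤ c := fun i =>
    hcon _ (hM.eigenvalues_mem_spectrum_real i)
  set U : Matrix V V ℝ := (hM.eigenvectorUnitary : Matrix V V ℝ) with hU
  have hUU : U * star U = 1 := (Matrix.mem_unitaryGroup_iff).mp hM.eigenvectorUnitary.2
  set D : Matrix V V ℝ := Matrix.diagonal (RCLike.ofReal ∘ hM.eigenvalues) with hD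
  have hspec : M = U * D * star U := hM.spectral_theorem
  set y : V → ℝ := star U *ᵥ x with hy
  have hxU : x ᵥ* U = y := by
    rw [hy, Matrix.star_eq_conjTranspose, Matrix.conjTranspose_eq_transpose_of_trivial,
      Matrix.mulVec_transpose]
  have key : x ⬝ᵥ M *ᵥ x = y ⬝ᵥ D *ᵥ y := by
    rw [hspec, ← Matrix.mulVec_mulVec, ← Matrix.mulVec_mulVec, Matrix.dotProduct_mulVec x U,
      hxU]
  have hyy : y ⬝ᵥ y = x ⬝ᵥ x := by
    calc y ⬝ᵥ y = y ⬝ᵥ (star U *ᵥ x) := rfl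
    _ = (y ᵥ* star U) ⬝ᵥ x := (Matrix.dotProduct_mulVec _ _ _)
    _ = ((x ᵥ* U) ᵥ* star U) ⬝ᵥ x := by rw [hxU]
    _ = (x ᵥ* (U * star U)) ⬝ᵥ x := by rw [Matrix.vecMul_vecMul]
    _ = x ⬝ᵥ x := by rw [hUU, Matrix.vecMul_one]
  have hDle : y ⬝ᵥ D *ᵥ y ≤ c * (y ⬝ᵥ y) := by
    rw [hD]
    simp only [dotProduct, Matrix.mulVec_diagonal, Finset.mul_sum]
    apply Finset.sum_le_sum
    intro i _
    have h1 : y i * ((RCLike.ofReal ∘ hM.eigenvalues) i * y i)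
        = hM.eigenvalues i * (y i * y i) := by
      simp only [Function.comp_apply, RCLike.ofReal_real_eq_id, id_eq]
      ring
    rw [h1]
    have h2 : (0:ℝ) ≤ y i * y i := mul_self_nonneg _
    nlinarith [hle i]
  rw [key] at h
  rw [hyy] at hDle
  linarith

lemma aalpha_isHermitian {V : Type*} [Fintype V] [DecidableEq V] (α : ℝ) (G : SimpleGraph V)
    [DecidableRel G.Adj] : (Aalpha α G).IsHermitian := by
  rw [Matrix.IsHermitian, Matrix.conjTranspose_eq_transpose_of_trivial]
  ext i j
  rw [Matrix.transpose_apply, aalpha_apply, aalpha_apply]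
  by_cases hij : i = j
  · subst hij; rfl
  · simp [hij, Ne.symm hij, SimpleGraph.adj_comm]

open Finset
variable (n δ : ℕ)

lemma cardC_eq (hδ : 2 ≤ δ) :
    (Finset.univ.filter (fun z : VXt n δ =>
        cellOf z = none ∨ cellOf z = some (⟨0, by omega⟩ : Fin δ))).card
      = δ + (n - 2 * δ + 1) := by
  set i0 : Fin δ := ⟨0, by omega⟩ with hi0
  rw [Finset.card_filter, Fintype.sum_sum_type]
  have h1 : ∀ a : Fin δ, (if (cellOf (Sum.inl a : VXt n δ) = none ∨
      cellOf (Sum.inl a : VXt n δ) = some i0) then 1 else 0) = 1 := by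
    intro a; simp [cellOf]
  rw [Finset.sum_congr rfl (fun a _ => h1 a)]
  simp only [Finset.sum_const, Finset.card_univ, Fintype.card_fin, smul_eq_mul, mul_one]
  congr 1
  have h2 : ∀ p : (Σ i : Fin δ, Fin (pparts n δ i)),
      (if (cellOf (Sum.inr p : VXt n δ) = none ∨ cellOf (Sum.inr p : VXt n δ) = some i0)
        then 1 else 0) = (if p.1 = i0 then 1 else 0) := by
    rintro ⟨i, j⟩; simp [cellOf]
  rw [Finset.sum_congr rfl (fun p _ => h2 p)]
  rw [← Finset.univ_sigma_univ, Finset.sum_sigma]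
  have h3 : ∀ i : Fin δ, (∑ _j : Fin (pparts n δ i), if i = i0 then 1 else 0)
      = if i = i0 then pparts n δ i else 0 := by
    intro i
    rw [Finset.sum_const, Finset.card_univ, Fintype.card_fin, smul_eq_mul]
    split <;> ring
  rw [Finset.sum_congr rfl (fun i _ => h3 i), Finset.sum_ite_eq' Finset.univ i0]
  simp [pparts, hi0]

set_option maxHeartbeats 1000000 in
lemma extremal_quad (α : ℝ) (hα0 : 0 ≤ α) (hα1 : α < 1) (n δ : ℕ) (hδ : 2 ≤ δ)
    (h2δ : 2 * δ ≤ n) :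
    ∃ x : VXt n δ → ℝ,
      ((n:ℝ) - δ) * (x ⬝ᵥ x) < x ⬝ᵥ (Aalpha α (cliqueJoin δ (pparts n δ))) *ᵥ x := by
  set G := cliqueJoin δ (pparts n δ) with hG
  letI : DecidableRel G.Adj := fun x y => decidable_of_iff _ (cliqueJoin_adj _ _ x y).symm
  set i0 : Fin δ := ⟨0, by omega⟩ with hi0
  set i1 : Fin δ := ⟨1, by omega⟩ with hi1
  have hp1 : pparts n δ i1 = 1 := by simp [pparts, hi1]
  set u₀ : VXt n δ := Sum.inr ⟨i1, ⟨0, by rw [hp1]; norm_num⟩⟩ with hu₀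
  set C : Finset (VXt n δ) :=
    Finset.univ.filter (fun z => cellOf z = none ∨ cellOf z = some i0) with hC
  set K : ℝ := (n:ℝ) - δ with hKdef
  have hδn : δ ≤ n := by omega
  have hcard : C.card = δ + (n - 2 * δ + 1) := cardC_eq n δ hδ
  have hK : (C.card : ℝ) = K + 1 := by
    rw [hcard]
    have h' : δ + (n - 2*δ + 1) = (n - δ) + 1 := by omega
    rw [h', hKdef]
    push_cast [Nat.cast_sub hδn]
    ring
  have hδR : (2:ℝ) ≤ (δ:ℝ) := by exact_mod_cast hδ
  have hKpos : 0 < K := by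
    have : (2*δ : ℕ) ≤ (n:ℕ) := h2δ
    have h2 : ((2*δ : ℕ):ℝ) ≤ (n:ℝ) := by exact_mod_cast this
    push_cast at h2
    rw [hKdef]; linarith
  set t : ℝ := (1-α)*(δ:ℝ)/(2*K) with htdef
  have ht : 0 < t := by
    apply div_pos
    · apply mul_pos (by linarith) (by linarith)
    · linarith
  set x : VXt n δ → ℝ := Sum.elim (fun _ : Fin δ => (1:ℝ))
    (fun p => if (p.1:ℕ) = 0 then 1 else if (p.1:ℕ) = 1 then t else 0) with hx
  -- basic facts about x
  have hx1 : ∀ z ∈ C, x z = 1 := by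
    intro z hz
    rw [hC, Finset.mem_filter] at hz
    obtain ⟨-, hz⟩ := hz
    match z with
    | Sum.inl a => rfl
    | Sum.inr ⟨i, j⟩ =>
      rcases hz with h | h
      · exact absurd h (by simp [cellOf])
      · have : i = i0 := by simpa [cellOf] using h
        subst this
        simp [hx, hi0]
  have hxu : x u₀ = t := by simp [hx, hu₀, hi1]
  have hx0 : ∀ z, z ∉ C → z ≠ u₀ → x z = 0 := by
    intro z hzC hzu
    match z with
    | Sum.inl a => exact absurd (by rw [hC, Finset.mem_filter]; simp [cellOf]) hzC
    | Sum.inr ⟨i, j⟩ =>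
      have hi0' : (i:ℕ) ≠ 0 := by
        intro h
        apply hzC
        have : i = i0 := by rw [hi0]; exact Fin.ext h
        rw [hC, Finset.mem_filter]; simp [cellOf, this]
      have hi1' : (i:ℕ) ≠ 1 := by
        intro h
        apply hzu
        have hii : i = i1 := by rw [hi1]; exact Fin.ext h
        subst hii
        have hjlt : (j:ℕ) < 1 := by
          have hj := j.2
          simpa [pparts, hi1] using hj
        have : j = ⟨0, by rw [hp1]; norm_num⟩ := by
          apply Fin.ext
          show (j:ℕ) = 0
          omega
        rw [hu₀, this]
      simp [hx, hi0', hi1']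
  have hxnn : ∀ z, 0 ≤ x z := by
    intro z
    match z with
    | Sum.inl a => norm_num [hx]
    | Sum.inr ⟨i, j⟩ =>
      simp only [hx, Sum.elim_inr]
      split
      · norm_num
      · split
        · linarith
        · exact le_refl 0
  -- adjacency and degree facts
  have hu₀C : u₀ ∉ C := by
    simp [hC, hu₀, cellOf, hi0, hi1, Fin.ext_iff]
  have hCadj : ∀ z ∈ C, ∀ y ∈ C, z ≠ y → G.Adj z y := by
    intro z hz y hy hne
    rw [hC, Finset.mem_filter] at hz hy
    rw [hG, cliqueJoin_adj]
    refine ⟨hne, ?_⟩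
    rcases hz.2 with h | h <;> rcases hy.2 with h' | h' <;> simp [h, h']
  have hhubadj : ∀ a : Fin δ, G.Adj u₀ (Sum.inl a) := by
    intro a
    rw [hG, cliqueJoin_adj]
    exact ⟨by simp [hu₀], Or.inr (Or.inl rfl)⟩
  have hhubC : ∀ a : Fin δ, (Sum.inl a : VXt n δ) ∈ C := by
    intro a; rw [hC, Finset.mem_filter]; simp [cellOf]
  have hdegC : ∀ z ∈ C, (C.card : ℝ) - 1 ≤ (G.degree z : ℝ) := by
    intro z hz
    have hsub : C.erase z ⊆ G.neighborFinset z := by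
      intro y hy
      rw [Finset.mem_erase] at hy
      rw [SimpleGraph.mem_neighborFinset]
      exact G.adj_symm (hCadj y hy.2 z hz (hy.1))
    have hcardle : C.card - 1 ≤ G.degree z := by
      rw [← Finset.card_erase_of_mem hz]
      exact Finset.card_le_card hsub
    have h1C : 1 ≤ C.card := Finset.card_pos.mpr ⟨z, hz⟩
    have := (Nat.cast_le (α := ℝ)).mpr hcardle
    rwa [Nat.cast_sub h1C, Nat.cast_one] at this
  have hdegu : (δ:ℝ) ≤ (G.degree u₀ : ℝ) := by
    have hsub : Finset.univ.image (Sum.inl : Fin δ → VXt n δ) ⊆ G.neighborFinset u₀ := by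
      intro y hy
      rw [Finset.mem_image] at hy
      obtain ⟨a, -, rfl⟩ := hy
      rw [SimpleGraph.mem_neighborFinset]
      exact hhubadj a
    have h1 : (Finset.univ.image (Sum.inl : Fin δ → VXt n δ)).card = δ := by
      rw [Finset.card_image_of_injective _ Sum.inl_injective]
      simp
    have := Finset.card_le_card hsub
    rw [h1] at this
    exact_mod_cast this
  -- the matrix
  set M := Aalpha α G with hM
  have hMnn : ∀ z y, 0 ≤ M z y := fun z y => aalpha_nonneg hα0 (le_of_lt hα1) G z y
  set f : VXt n δ → VXt n δ → ℝ := fun z y => x z * (M z y * x y) with hf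
  have hfnn : ∀ z y, 0 ≤ f z y := fun z y =>
    mul_nonneg (hxnn z) (mul_nonneg (hMnn z y) (hxnn y))
  have key : x ⬝ᵥ M *ᵥ x = ∑ z, ∑ y, f z y := by
    apply Finset.sum_congr rfl
    intro z _
    rw [Matrix.mulVec, dotProduct, Finset.mul_sum]
  -- norm computation
  have keyxx : x ⬝ᵥ x = (C.card : ℝ) + t * t := by
    rw [dotProduct]
    rw [← Finset.sum_filter_add_sum_filter_not Finset.univ (fun z => z ∈ C)]
    have e1 : Finset.univ.filter (fun z => z ∈ C) = C := Finset.filter_univ_mem C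
    rw [e1]
    have e2 : ∑ z ∈ C, x z * x z = (C.card : ℝ) := by
      rw [Finset.sum_congr rfl (fun z hz => by rw [hx1 z hz, mul_one])]
      simp
    have e3 : ∑ z ∈ Finset.univ.filter (fun z => z ∉ C), x z * x z = t * t := by
      rw [Finset.sum_eq_single_of_mem u₀
        (Finset.mem_filter.mpr ⟨Finset.mem_univ _, hu₀C⟩)
        (fun z hz hzu => by
          rw [Finset.mem_filter] at hz
          rw [hx0 z hz.2 hzu, zero_mul])]
      rw [hxu]
    rw [e2, e3]
  -- lower bound for rows indexed by C
  have boundC : ∀ z ∈ C, K ≤ ∑ y, f z y := by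
    intro z hz
    have hsub : C ⊆ Finset.univ := Finset.subset_univ C
    have h1 : ∑ y ∈ C, f z y ≤ ∑ y, f z y :=
      Finset.sum_le_sum_of_subset_of_nonneg hsub (fun y _ _ => hfnn z y)
    have h2 : f z z + ∑ y ∈ C.erase z, f z y = ∑ y ∈ C, f z y :=
      Finset.add_sum_erase C (f z) hz
    have h3 : α * K ≤ f z z := by
      show α * K ≤ x z * (Aalpha α G z z * x z)
      rw [aalpha_apply, if_pos rfl, if_neg (G.irrefl), hx1 z hz]
      have := hdegC z hz
      rw [hK] at this
      nlinarith
    have h4 : ∀ y ∈ C.erase z, f z y = 1 - α := by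
      intro y hy
      rw [Finset.mem_erase] at hy
      show x z * (Aalpha α G z y * x y) = 1 - α
      rw [aalpha_apply, if_neg (fun h => hy.1 h.symm),
        if_pos (hCadj z hz y hy.2 (fun h => hy.1 h.symm)), hx1 z hz, hx1 y hy.2]
      ring
    have h5 : ∑ y ∈ C.erase z, f z y = ((C.card : ℝ) - 1) * (1 - α) := by
      rw [Finset.sum_congr rfl h4, Finset.sum_const, Finset.card_erase_of_mem hz]
      have h1C : 1 ≤ C.card := Finset.card_pos.mpr ⟨z, hz⟩
      rw [nsmul_eq_mul, Nat.cast_sub h1C, Nat.cast_one]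
    have hKC : (C.card : ℝ) - 1 = K := by rw [hK]; ring
    rw [hKC] at h5
    calc K = α * K + K * (1 - α) := by ring
    _ ≤ f z z + ∑ y ∈ C.erase z, f z y := by rw [h5]; linarith
    _ = ∑ y ∈ C, f z y := h2
    _ ≤ ∑ y, f z y := h1
  -- lower bound for the u₀ row
  have boundu : α * δ * (t*t) + (1-α) * δ * t ≤ ∑ y, f u₀ y := by
    set hub : Finset (VXt n δ) := Finset.univ.image (Sum.inl : Fin δ → VXt n δ) with hhub
    have hu₀hub : u₀ ∉ hub := by
      simp [hhub, hu₀]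
    have hsub : insert u₀ hub ⊆ Finset.univ := Finset.subset_univ _
    have h1 : ∑ y ∈ insert u₀ hub, f u₀ y ≤ ∑ y, f u₀ y :=
      Finset.sum_le_sum_of_subset_of_nonneg hsub (fun y _ _ => hfnn u₀ y)
    rw [Finset.sum_insert hu₀hub] at h1
    have h2 : α * δ * (t*t) ≤ f u₀ u₀ := by
      show α * δ * (t*t) ≤ x u₀ * (Aalpha α G u₀ u₀ * x u₀)
      rw [aalpha_apply, if_pos rfl, if_neg (G.irrefl), hxu]
      have h9 : 0 ≤ (α*((G.degree u₀:ℝ)-δ))*(t*t) :=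
        mul_nonneg (mul_nonneg hα0 (by linarith [hdegu])) (le_of_lt (mul_pos ht ht))
      nlinarith [h9]
    have h3 : ∑ y ∈ hub, f u₀ y = (1-α) * δ * t := by
      rw [hhub, Finset.sum_image (fun a _ b _ h => Sum.inl_injective h)]
      have : ∀ a : Fin δ, f u₀ (Sum.inl a) = (1-α) * t := by
        intro a
        show x u₀ * (Aalpha α G u₀ (Sum.inl a) * x (Sum.inl a)) = (1-α) * t
        rw [aalpha_apply, if_neg (by simp [hu₀]), if_pos (hhubadj a), hxu,
          hx1 _ (hhubC a)]
        ring
      rw [Finset.sum_congr rfl (fun a _ => this a)]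
      simp only [Finset.sum_const, Finset.card_univ, Fintype.card_fin, nsmul_eq_mul]
      ring
    linarith
  -- global bound
  have total : (C.card : ℝ) * K + (α * δ * (t*t) + (1-α) * δ * t) ≤ ∑ z, ∑ y, f z y := by
    have hsub : insert u₀ C ⊆ Finset.univ := Finset.subset_univ _
    have h1 : ∑ z ∈ insert u₀ C, (∑ y, f z y) ≤ ∑ z, ∑ y, f z y :=
      Finset.sum_le_sum_of_subset_of_nonneg hsub
        (fun z _ _ => Finset.sum_nonneg (fun y _ => hfnn z y))
    rw [Finset.sum_insert hu₀C] at h1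
    have h2 : (C.card : ℝ) * K ≤ ∑ z ∈ C, (∑ y, f z y) := by
      calc (C.card : ℝ) * K = ∑ _z ∈ C, K := by rw [Finset.sum_const, nsmul_eq_mul]
      _ ≤ ∑ z ∈ C, (∑ y, f z y) := Finset.sum_le_sum boundC
    linarith
  refine ⟨x, ?_⟩
  rw [key, keyxx]
  have hKt : K * t = (1-α) * (δ:ℝ) / 2 := by
    rw [htdef]
    field_simp
  have hfinal : K * ((C.card : ℝ) + t * t) <
      (C.card : ℝ) * K + (α * δ * (t*t) + (1-α) * δ * t) := by
    have h6 : K * (t*t) < (1-α) * δ * t := by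
      have h7 : K * t * t = ((1-α) * (δ:ℝ) / 2) * t := by rw [hKt]
      nlinarith [ht, mul_pos ht ht]
    have h8 : 0 ≤ α * (δ:ℝ) * (t*t) :=
      mul_nonneg (mul_nonneg hα0 (by linarith)) (le_of_lt (mul_pos ht ht))
    nlinarith [h8, h6]
  linarith
lemma ncard_neighborSet_eq_degree {V : Type*} [Fintype V] (G : SimpleGraph V)
    [DecidableRel G.Adj] (z : V) : (G.neighborSet z).ncard = G.degree z := by
  classical
  rw [Set.ncard_eq_toFinset_card']
  rw [SimpleGraph.degree]
  congr 1

lemma evenFactor_of_bigDegree {V : Type*} [Fintype V] [DecidableEq V]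
    (G : SimpleGraph V) [DecidableRel G.Adj] (δ : ℕ) (hδ : 2 ≤ δ)
    (hdeg : ∀ x, δ ≤ G.degree x) (v : V)
    (hv : Fintype.card V + 1 ≤ G.degree v + δ) : HasEvenFactor G := by
  classical
  set n := Fintype.card V with hn
  set A : Finset V := G.neighborFinset v with hA
  set W : Finset V := Finset.univ \ (insert v A) with hW
  have hvA : v ∉ A := by simp [hA]
  have hAcard : A.card = G.degree v := rfl
  have hWcard : W.card + (G.degree v + 1) = n := by
    have h1 : (insert v A).card = G.degree v + 1 := by
      rw [Finset.card_insert_of_notMem hvA, hAcard]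
    have h2 : (insert v A).card ≤ Fintype.card V := by
      rw [← Finset.card_univ]
      exact Finset.card_le_card (Finset.subset_univ _)
    rw [hW, Finset.card_sdiff_of_subset (Finset.subset_univ _), Finset.card_univ, h1]
    rw [h1] at h2
    rw [hn]
    omega
  have hWsmall : W.card + 2 ≤ δ := by omega
  -- membership facts
  have hmemA : ∀ u, u ∈ A ↔ G.Adj v u := fun u => G.mem_neighborFinset v u
  have hmemW : ∀ w, w ∈ W ↔ (w ≠ v ∧ ¬ G.Adj v w) := by
    intro w
    rw [hW, Finset.mem_sdiff, Finset.mem_insert]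
    constructor
    · rintro ⟨-, h⟩
      push_neg at h
      exact ⟨h.1, fun hadj => h.2 ((hmemA w).mpr hadj)⟩
    · rintro ⟨h1, h2⟩
      refine ⟨Finset.mem_univ _, ?_⟩
      push_neg
      exact ⟨h1, fun hmem => h2 ((hmemA w).mp hmem)⟩
  have hpart : ∀ z, z = v ∨ z ∈ A ∨ z ∈ W := by
    intro z
    by_cases h1 : z = v
    · exact Or.inl h1
    by_cases h2 : z ∈ A
    · exact Or.inr (Or.inl h2)
    · exact Or.inr (Or.inr ((hmemW z).mpr ⟨h1, fun h => h2 ((hmemA z).mpr h)⟩))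
  have hAW : ∀ z, z ∈ A → z ∉ W := by
    intro z hz hzW
    exact ((hmemW z).mp hzW).2 ((hmemA z).mp hz)
  have hvW : v ∉ W := fun h => ((hmemW v).mp h).1 rfl
  -- claim 2 : every vertex of A has a neighbor in A
  have claim2 : ∀ u, u ∈ A → ∃ y, y ∈ A ∧ G.Adj u y := by
    intro u hu
    have hsub : G.neighborFinset u \ (insert v W) ⊆ A := by
      intro y hy
      rw [Finset.mem_sdiff, Finset.mem_insert] at hy
      push_neg at hy
      rcases hpart y with h | h | h
      · exact absurd h hy.2.1
      · exact h
      · exact absurd h hy.2.2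
    have hcard : 1 ≤ (G.neighborFinset u \ (insert v W)).card := by
      have h1 := Finset.le_card_sdiff (insert v W) (G.neighborFinset u)
      have h2 : (insert v W).card ≤ W.card + 1 := Finset.card_insert_le _ _
      have h3 : δ ≤ (G.neighborFinset u).card := hdeg u
      omega
    obtain ⟨y, hy⟩ := Finset.card_pos.mp
      (show 0 < (G.neighborFinset u \ (insert v W)).card by omega)
    refine ⟨y, hsub hy, ?_⟩
    rw [Finset.mem_sdiff, SimpleGraph.mem_neighborFinset] at hy
    exact hy.1
  -- claim 1 : every vertex of W has two distinct neighbors in A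
  have claim1 : ∀ w, w ∈ W → ∃ y z, (y ∈ A ∧ G.Adj w y) ∧ (z ∈ A ∧ G.Adj w z) ∧ y ≠ z := by
    intro w hw
    have hsub : G.neighborFinset w \ W ⊆ A := by
      intro y hy
      rw [Finset.mem_sdiff, SimpleGraph.mem_neighborFinset] at hy
      rcases hpart y with h | h | h
      · subst h
        exact absurd (G.adj_symm hy.1) (((hmemW w).mp hw).2)
      · exact h
      · exact absurd h hy.2
    have hcard : 2 ≤ (G.neighborFinset w \ W).card := by
      have h1 := Finset.le_card_sdiff W (G.neighborFinset w)
      have h3 : δ ≤ (G.neighborFinset w).card := hdeg w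
      omega
    obtain ⟨y, hy, z, hz, hyz⟩ := Finset.one_lt_card.mp
      (show 1 < (G.neighborFinset w \ W).card by omega)
    have hy' := hy; have hz' := hz
    rw [Finset.mem_sdiff, SimpleGraph.mem_neighborFinset] at hy' hz'
    exact ⟨y, z, ⟨hsub hy, hy'.1⟩, ⟨hsub hz, hz'.1⟩, hyz⟩
  choose! aw bw hawbw using claim1
  have haA : ∀ w ∈ W, aw w ∈ A := fun w hw => (hawbw w hw).1.1
  have hbA : ∀ w ∈ W, bw w ∈ A := fun w hw => (hawbw w hw).2.1.1
  have hadja : ∀ w ∈ W, G.Adj w (aw w) := fun w hw => (hawbw w hw).1.2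
  have hadjb : ∀ w ∈ W, G.Adj w (bw w) := fun w hw => (hawbw w hw).2.1.2
  have hab : ∀ w ∈ W, aw w ≠ bw w := fun w hw => (hawbw w hw).2.2
  choose! s hsA hsadj using claim2
  -- the base subgraph F
  set F : SimpleGraph V := {
    Adj := fun x y => x ≠ y ∧
      (((x ∈ W ∧ (y = aw x ∨ y = bw x)) ∨ (x ∈ A ∧ y = s x)) ∨
       ((y ∈ W ∧ (x = aw y ∨ x = bw y)) ∨ (y ∈ A ∧ x = s y)))
    symm := ⟨by
      intro x y h
      exact ⟨h.1.symm, h.2.elim Or.inr Or.inl⟩⟩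
    loopless := ⟨fun x h => h.1 rfl⟩ } with hF
  have hFadj : ∀ x y, F.Adj x y ↔ (x ≠ y ∧
      (((x ∈ W ∧ (y = aw x ∨ y = bw x)) ∨ (x ∈ A ∧ y = s x)) ∨
       ((y ∈ W ∧ (x = aw y ∨ x = bw y)) ∨ (y ∈ A ∧ x = s y)))) := fun x y => Iff.rfl
  have hFG : F ≤ G := by
    intro x y hxy
    rw [hFadj] at hxy
    rcases hxy.2 with (⟨hw, hab'⟩ | ⟨ha, hs'⟩) | (⟨hw, hab'⟩ | ⟨ha, hs'⟩)
    · rcases hab' with rfl | rfl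
      · exact hadja x hw
      · exact hadjb x hw
    · rw [hs']; exact hsadj x ha
    · rcases hab' with rfl | rfl
      · exact (hadja y hw).symm
      · exact (hadjb y hw).symm
    · rw [hs']; exact (hsadj y ha).symm
  -- neighbor sets of F
  have hNFW : ∀ w ∈ W, F.neighborFinset w = {aw w, bw w} := by
    intro w hw
    ext y
    rw [SimpleGraph.mem_neighborFinset, hFadj, Finset.mem_insert, Finset.mem_singleton]
    constructor
    · rintro ⟨hne, (⟨-, h⟩ | ⟨ha, -⟩) | (⟨hyW, h⟩ | ⟨hyA, h⟩)⟩
      · exact h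
      · exact absurd hw (fun c => hAW w ha c)
      · rcases h with rfl | rfl
        · exact absurd hw (hAW _ (haA y hyW))
        · exact absurd hw (hAW _ (hbA y hyW))
      · exact absurd hw (hAW _ (h ▸ hsA y hyA))
    · intro h
      have hyA : y ∈ A := by
        rcases h with rfl | rfl
        · exact haA w hw
        · exact hbA w hw
      exact ⟨fun hc => hAW y hyA (hc ▸ hw), Or.inl (Or.inl ⟨hw, h⟩)⟩
  have hdegFW : ∀ w ∈ W, F.degree w = 2 := by
    intro w hw
    rw [SimpleGraph.degree, hNFW w hw]
    rw [Finset.card_insert_of_notMem (by simp [hab w hw]), Finset.card_singleton]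
  have hFv : ∀ y, ¬ F.Adj v y := by
    intro y hy
    rw [hFadj] at hy
    rcases hy.2 with (⟨hw, -⟩ | ⟨ha, -⟩) | (⟨hyW, h⟩ | ⟨hyA, h⟩)
    · exact hvW hw
    · exact hvA ha
    · rcases h with rfl | rfl
      · exact hvA (haA y hyW)
      · exact hvA (hbA y hyW)
    · exact hvA (h ▸ hsA y hyA)
  have hNFv : F.neighborFinset v = ∅ := by
    ext y
    simp only [SimpleGraph.mem_neighborFinset, Finset.notMem_empty, iff_false]
    exact hFv y
  have hdegFv : F.degree v = 0 := by rw [SimpleGraph.degree, hNFv, Finset.card_empty]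
  have hsmem : ∀ u ∈ A, s u ∈ F.neighborFinset u := by
    intro u hu
    rw [SimpleGraph.mem_neighborFinset, hFadj]
    exact ⟨(hsadj u hu).ne, Or.inl (Or.inr ⟨hu, rfl⟩)⟩
  have hdegFA : ∀ u ∈ A, 1 ≤ F.degree u := by
    intro u hu
    rw [SimpleGraph.degree]
    exact Finset.card_pos.mpr ⟨s u, hsmem u hu⟩
  have hvNF : ∀ u, v ∉ F.neighborFinset u := by
    intro u hc
    rw [SimpleGraph.mem_neighborFinset] at hc
    exact hFv u hc.symm
  -- the set of odd F-degree vertices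
  set T : Finset V := Finset.univ.filter (fun z => Odd (F.degree z)) with hT
  have hmemT : ∀ z, z ∈ T ↔ Odd (F.degree z) := by
    intro z; rw [hT, Finset.mem_filter]; simp
  have hTA : T ⊆ A := by
    intro z hz
    rw [hmemT] at hz
    rcases hpart z with rfl | h | h
    · rw [hdegFv] at hz; norm_num at hz
    · exact h
    · rw [hdegFW z h] at hz
      exact absurd hz (by decide)
  have hTeven : Even T.card := by
    exact F.even_card_odd_degree_vertices
  by_cases hT0 : T = ∅
  · -- all F-degrees of A-vertices are even; fix up at u₀, x₀
    have hAeven : ∀ u ∈ A, Even (F.degree u) := by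
      intro u hu
      by_contra hodd
      rw [Nat.not_even_iff_odd] at hodd
      have : u ∈ T := (hmemT u).mpr hodd
      rw [hT0] at this
      exact absurd this (Finset.notMem_empty u)
    have hAne : A.Nonempty := by
      rw [← Finset.card_pos, hAcard]
      have := hdeg v
      omega
    obtain ⟨u₀, hu₀⟩ := hAne
    set x₀ : V := s u₀ with hx₀
    have hx₀A : x₀ ∈ A := hsA u₀ hu₀
    have hux : u₀ ≠ x₀ := (hsadj u₀ hu₀).ne
    have hvu : v ≠ u₀ := fun h => hvA (h ▸ hu₀)
    have hvx : v ≠ x₀ := fun h => hvA (h ▸ hx₀A)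
    have hFux : F.Adj u₀ x₀ := by
      rw [hFadj]
      exact ⟨hux, Or.inl (Or.inr ⟨hu₀, rfl⟩)⟩
    set H : SimpleGraph V := {
      Adj := fun x y => (F.Adj x y ∧ ¬((x = u₀ ∧ y = x₀) ∨ (x = x₀ ∧ y = u₀))) ∨
        ((x = v ∧ (y = u₀ ∨ y = x₀)) ∨ (y = v ∧ (x = u₀ ∨ x = x₀)))
      symm := ⟨by
        intro x y h
        rcases h with ⟨h1, h2⟩ | (h | h)
        · exact Or.inl ⟨h1.symm, fun c => h2 (c.elim (fun c => Or.inr ⟨c.2, c.1⟩) (fun c => Or.inl ⟨c.2, c.1⟩))⟩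
        · exact Or.inr (Or.inr h)
        · exact Or.inr (Or.inl h)⟩
      loopless := ⟨by
        intro x h
        rcases h with ⟨h1, -⟩ | (⟨rfl, h⟩ | ⟨rfl, h⟩)
        · exact F.loopless.irrefl x h1
        · exact h.elim (fun c => hvu c) (fun c => hvx c)
        · exact h.elim (fun c => hvu c) (fun c => hvx c)⟩ } with hH
    have hHadj : ∀ x y, H.Adj x y ↔ ((F.Adj x y ∧ ¬((x = u₀ ∧ y = x₀) ∨ (x = x₀ ∧ y = u₀))) ∨
        ((x = v ∧ (y = u₀ ∨ y = x₀)) ∨ (y = v ∧ (x = u₀ ∨ x = x₀)))) := fun x y => Iff.rfl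
    have hHG : H ≤ G := by
      intro x y hxy
      rw [hHadj] at hxy
      rcases hxy with ⟨h1, -⟩ | (⟨rfl, h⟩ | ⟨rfl, h⟩)
      · exact hFG h1
      · rcases h with rfl | rfl
        · exact (hmemA _).mp hu₀
        · exact (hmemA _).mp hx₀A
      · rcases h with rfl | rfl
        · exact ((hmemA _).mp hu₀).symm
        · exact ((hmemA _).mp hx₀A).symm
    -- neighbor sets of H
    have hNHv : H.neighborFinset v = {u₀, x₀} := by
      ext y
      rw [SimpleGraph.mem_neighborFinset, hHadj, Finset.mem_insert, Finset.mem_singleton]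
      constructor
      · rintro (⟨h1, -⟩ | (⟨-, h⟩ | ⟨rfl, h⟩))
        · exact absurd h1 (hFv y)
        · exact h
        · exact absurd h (by push_neg; exact ⟨hvu, hvx⟩)
      · intro h
        exact Or.inr (Or.inl ⟨rfl, h⟩)
    have hNHu₀ : H.neighborFinset u₀ = insert v ((F.neighborFinset u₀).erase x₀) := by
      ext y
      rw [SimpleGraph.mem_neighborFinset, hHadj, Finset.mem_insert, Finset.mem_erase,
        SimpleGraph.mem_neighborFinset]
      constructor
      · rintro (⟨h1, h2⟩ | (⟨h3, -⟩ | ⟨rfl, -⟩))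
        · push_neg at h2
          exact Or.inr ⟨h2.1 rfl, h1⟩
        · exact absurd h3 hvu.symm
        · exact Or.inl rfl
      · rintro (rfl | ⟨h1, h2⟩)
        · exact Or.inr (Or.inr ⟨rfl, Or.inl rfl⟩)
        · refine Or.inl ⟨h2, ?_⟩
          push_neg
          exact ⟨fun _ => h1, fun c => absurd (c ▸ h2 : F.Adj x₀ y) (fun hf => hux (c ▸ rfl))⟩
    have hNHx₀ : H.neighborFinset x₀ = insert v ((F.neighborFinset x₀).erase u₀) := by
      ext y
      rw [SimpleGraph.mem_neighborFinset, hHadj, Finset.mem_insert, Finset.mem_erase,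
        SimpleGraph.mem_neighborFinset]
      constructor
      · rintro (⟨h1, h2⟩ | (⟨h3, -⟩ | ⟨rfl, -⟩))
        · push_neg at h2
          exact Or.inr ⟨h2.2 rfl, h1⟩
        · exact absurd h3 hvx.symm
        · exact Or.inl rfl
      · rintro (rfl | ⟨h1, h2⟩)
        · exact Or.inr (Or.inr ⟨rfl, Or.inr rfl⟩)
        · refine Or.inl ⟨h2, ?_⟩
          push_neg
          exact ⟨fun c => absurd c.symm hux, fun _ => h1⟩
    have hNHother : ∀ z, z ≠ v → z ≠ u₀ → z ≠ x₀ →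
        H.neighborFinset z = F.neighborFinset z := by
      intro z h1 h2 h3
      ext y
      rw [SimpleGraph.mem_neighborFinset, hHadj, SimpleGraph.mem_neighborFinset]
      constructor
      · rintro (⟨hf, -⟩ | (⟨hc, -⟩ | ⟨-, hc⟩))
        · exact hf
        · exact absurd hc h1
        · rcases hc with rfl | rfl
          · exact absurd rfl h2
          · exact absurd rfl h3
      · intro hf
        refine Or.inl ⟨hf, ?_⟩
        push_neg
        exact ⟨fun c => absurd c h2, fun c => absurd c h3⟩
    refine ⟨H, hHG, ?_⟩
    intro z
    have hnc : (H.neighborSet z).ncard = (H.neighborFinset z).card :=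
      ncard_neighborSet_eq_degree H z
    rw [hnc]
    by_cases hzv : z = v
    · subst hzv
      rw [hNHv]
      rw [Finset.card_insert_of_notMem (by simp [hux]), Finset.card_singleton]
      exact ⟨by norm_num, by decide⟩
    by_cases hzu : z = u₀
    · subst hzu
      rw [hNHu₀]
      have hcd : (insert v ((F.neighborFinset z).erase x₀)).card = F.degree z := by
        rw [Finset.card_insert_of_notMem (fun hc => hvNF z (Finset.mem_of_mem_erase hc)),
          Finset.card_erase_of_mem (hsmem z hu₀)]
        have h9 := hdegFA z hu₀
        have hdd : F.degree z = (F.neighborFinset z).card := rfl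
        omega
      rw [hcd]
      exact ⟨hdegFA z hu₀, hAeven z hu₀⟩
    by_cases hzx : z = x₀
    · subst hzx
      rw [hNHx₀]
      have hmu : u₀ ∈ F.neighborFinset x₀ := by
        rw [SimpleGraph.mem_neighborFinset]
        exact hFux.symm
      have hcd : (insert v ((F.neighborFinset x₀).erase u₀)).card = F.degree x₀ := by
        rw [Finset.card_insert_of_notMem (fun hc => hvNF x₀ (Finset.mem_of_mem_erase hc)),
          Finset.card_erase_of_mem hmu]
        have h9 := hdegFA x₀ hx₀A
        have hdd : F.degree x₀ = (F.neighborFinset x₀).card := rfl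
        omega
      rw [hcd]
      exact ⟨hdegFA x₀ hx₀A, hAeven x₀ hx₀A⟩
    · rw [hNHother z hzv hzu hzx]
      rcases hpart z with rfl | h | h
      · exact absurd rfl hzv
      · have hev := hAeven z h
        have hpos := hdegFA z h
        exact ⟨hpos, hev⟩
      · have : (F.neighborFinset z).card = 2 := hdegFW z h
        rw [this]
        exact ⟨by norm_num, by decide⟩
  · -- T nonempty : fix parities with edges to v
    set H : SimpleGraph V := {
      Adj := fun x y => F.Adj x y ∨ (x = v ∧ Odd (F.degree y)) ∨ (y = v ∧ Odd (F.degree x))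
      symm := ⟨by
        intro x y h
        rcases h with h | (h | h)
        · exact Or.inl h.symm
        · exact Or.inr (Or.inr h)
        · exact Or.inr (Or.inl h)⟩
      loopless := ⟨by
        intro x h
        rcases h with h | (⟨rfl, h⟩ | ⟨rfl, h⟩)
        · exact F.loopless.irrefl x h
        · rw [hdegFv] at h; exact absurd h (by decide)
        · rw [hdegFv] at h; exact absurd h (by decide)⟩ } with hH
    have hHadj : ∀ x y, H.Adj x y ↔ (F.Adj x y ∨ (x = v ∧ Odd (F.degree y)) ∨
        (y = v ∧ Odd (F.degree x))) := fun x y => Iff.rfl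
    have hHG : H ≤ G := by
      intro x y hxy
      rw [hHadj] at hxy
      rcases hxy with h | (⟨rfl, h⟩ | ⟨rfl, h⟩)
      · exact hFG h
      · exact (hmemA y).mp (hTA ((hmemT y).mpr h))
      · exact ((hmemA x).mp (hTA ((hmemT x).mpr h))).symm
    have hNHv : H.neighborFinset v = T := by
      ext y
      rw [SimpleGraph.mem_neighborFinset, hHadj, hmemT]
      constructor
      · rintro (h | (⟨-, h⟩ | ⟨rfl, h⟩))
        · exact absurd h (hFv y)
        · exact h
        · rw [hdegFv] at h; exact absurd h (by decide)
      · intro h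
        exact Or.inr (Or.inl ⟨rfl, h⟩)
    have hNHeven : ∀ z, z ≠ v → ¬ Odd (F.degree z) →
        H.neighborFinset z = F.neighborFinset z := by
      intro z h1 h2
      ext y
      rw [SimpleGraph.mem_neighborFinset, hHadj, SimpleGraph.mem_neighborFinset]
      constructor
      · rintro (h | (⟨hc, -⟩ | ⟨-, hc⟩))
        · exact h
        · exact absurd hc h1
        · exact absurd hc h2
      · exact fun h => Or.inl h
    have hNHodd : ∀ z, z ∈ A → Odd (F.degree z) →
        H.neighborFinset z = insert v (F.neighborFinset z) := by
      intro z hzA hodd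
      have hzv : z ≠ v := fun hc => hvA (hc ▸ hzA)
      ext y
      rw [SimpleGraph.mem_neighborFinset, hHadj, Finset.mem_insert,
        SimpleGraph.mem_neighborFinset]
      constructor
      · rintro (h | (⟨hc, -⟩ | ⟨rfl, -⟩))
        · exact Or.inr h
        · exact absurd hc hzv
        · exact Or.inl rfl
      · rintro (rfl | h)
        · exact Or.inr (Or.inr ⟨rfl, hodd⟩)
        · exact Or.inl h
    refine ⟨H, hHG, ?_⟩
    intro z
    have hnc : (H.neighborSet z).ncard = (H.neighborFinset z).card :=
      ncard_neighborSet_eq_degree H z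
    rw [hnc]
    by_cases hzv : z = v
    · subst hzv
      rw [hNHv]
      exact ⟨Finset.card_pos.mpr (Finset.nonempty_of_ne_empty hT0), hTeven⟩
    rcases hpart z with rfl | h | h
    · exact absurd rfl hzv
    · by_cases hodd : Odd (F.degree z)
      · rw [hNHodd z h hodd]
        rw [Finset.card_insert_of_notMem (hvNF z)]
        have hdd : F.degree z = (F.neighborFinset z).card := rfl
        constructor
        · omega
        · rw [← hdd]
          rcases hodd with ⟨m, hm⟩
          exact ⟨m + 1, by omega⟩
      · rw [hNHeven z hzv hodd]
        have hdd : F.degree z = (F.neighborFinset z).card := rfl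
        have h9 := hdegFA z h
        rw [Nat.not_odd_iff_even] at hodd
        rw [← hdd]
        exact ⟨by omega, hodd⟩
    · have h2 : ¬ Odd (F.degree z) := by
        rw [hdegFW z h]; decide
      rw [hNHeven z (fun hc => hvW (hc ▸ h)) h2]
      have : (F.neighborFinset z).card = 2 := hdegFW z h
      rw [this]
      exact ⟨by norm_num, by decide⟩


end Aux

theorem evenFactor_of_AalphaSpectralRadius
    {V : Type*} [Fintype V] (α : ℝ) (hα0 : 0 ≤ α) (hα1 : α < 1)
    (G : SimpleGraph V) [DecidableRel G.Adj] (hconn : G.Connected)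
    (n δ : ℕ) (hcard : Fintype.card V = n) (heven : Even n)
    (hmin : G.minDegree = δ) (hδ : 2 ≤ δ)
    (hn1 : α ≤ 1 / 2 → 7 * δ - 7 ≤ n)
    (hn2 : 1 / 2 < α → α ≤ 2 / 3 → 8 * δ - 8 ≤ n)
    (hn3 : 2 / 3 < α → (3 * (δ : ℝ) - 3) / (1 - α) ≤ (n : ℝ))
    (hρ : rhoAlpha α (cliqueJoin δ (fun i : Fin δ => if (i : ℕ) = 0 then n - 2 * δ + 1 else 1)) ≤ rhoAlpha α G) :
    HasEvenFactor G ∨ Nonempty (G ≃g cliqueJoin δ (fun i : Fin δ => if (i : ℕ) = 0 then n - 2 * δ + 1 else 1)) := by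
  classical
  -- reduce the size hypotheses to `2 * δ ≤ n`
  have h2δ : 2 * δ ≤ n := by
    rcases le_or_gt α (1/2) with hc | hc
    · have := hn1 hc; omega
    rcases le_or_gt α (2/3) with hc2 | hc2
    · have := hn2 hc hc2; omega
    · have h3 := hn3 hc2
      have hpos : (0:ℝ) < 1 - α := by linarith
      have hge : (9*(δ:ℝ) - 9) ≤ (3 * (δ:ℝ) - 3) / (1 - α) := by
        rw [le_div_iff₀ hpos]
        have hδR : (2:ℝ) ≤ (δ:ℝ) := by exact_mod_cast hδ
        nlinarith
      have h4 : (9*(δ:ℝ) - 9) ≤ (n:ℝ) := le_trans hge h3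
      have hδR : (2:ℝ) ≤ (δ:ℝ) := by exact_mod_cast hδ
      have h5 : ((2*δ:ℕ):ℝ) ≤ (n:ℝ) := by push_cast; nlinarith
      exact_mod_cast h5
  have hδn : δ ≤ n := by omega
  have hnpos : 0 < n := by omega
  haveI hVne : Nonempty V := by
    rw [← Fintype.card_pos_iff, hcard]; exact hnpos
  letI instVd : DecidableEq V := Classical.decEq V
  letI instXd : DecidableEq (VXt n δ) := Classical.decEq (VXt n δ)
  letI instXr : DecidableRel (cliqueJoin δ (pparts n δ)).Adj :=
    fun x y => decidable_of_iff _ (cliqueJoin_adj _ _ x y).symm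
  -- the extremal graph has spectral radius > n - δ
  obtain ⟨x, hx⟩ := extremal_quad α hα0 hα1 n δ hδ h2δ
  obtain ⟨lam, hlammem, hlamgt⟩ :=
    exists_spectrum_gt (aalpha_isHermitian α (cliqueJoin δ (pparts n δ))) x ((n:ℝ) - δ) hx
  have hbdd : BddAbove (spectrum ℝ (Aalpha α (cliqueJoin δ (pparts n δ)))) := by
    refine ⟨((cliqueJoin δ (pparts n δ)).maxDegree : ℝ), fun μ hμ => ?_⟩
    exact spectrum_aalpha_le hα0 (le_of_lt hα1) _ hμ
  have hExt : ((n:ℝ) - δ) < rhoAlpha α (cliqueJoin δ (pparts n δ)) := by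
    unfold rhoAlpha specRad
    exact lt_of_lt_of_le hlamgt (le_csSup hbdd hlammem)
  -- G's spectral radius is at most its max degree
  have hρG : rhoAlpha α G ≤ (G.maxDegree : ℝ) := by
    unfold rhoAlpha specRad
    exact Real.sSup_le (fun lam' hl => spectrum_aalpha_le hα0 (le_of_lt hα1) G hl)
      (Nat.cast_nonneg _)
  have hmax : ((n:ℝ) - δ) < (G.maxDegree : ℝ) := by
    calc ((n:ℝ) - δ) < rhoAlpha α (cliqueJoin δ (pparts n δ)) := hExt
    _ ≤ rhoAlpha α G := hρ
    _ ≤ (G.maxDegree : ℝ) := hρG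
  have hmaxN : n - δ < G.maxDegree := by
    have h6 : ((n - δ : ℕ):ℝ) < (G.maxDegree : ℝ) := by
      rw [Nat.cast_sub hδn]; exact hmax
    exact_mod_cast h6
  obtain ⟨v, hvmax⟩ := G.exists_maximal_degree_vertex
  have hvdeg : n + 1 ≤ G.degree v + δ := by omega
  have hdeg : ∀ z, δ ≤ G.degree z := fun z => hmin ▸ G.minDegree_le_degree z
  left
  exact evenFactor_of_bigDegree G δ hδ hdeg v (by rw [hcard]; exact hvdeg)
end

section
/- Let α ∈ [0,1) and let δ, n be positive integers with δ ≥ 2 and n ≥ 2δ. Then ρ_α(K_δ ∨ (K_{n−2δ+1} ∪ (δ−1)K_1)) > n − δ. -/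
open Matrix

/-! ### Auxiliary lemmas -/

open scoped InnerProductSpace in
lemma lt_specRad_of_rayleigh {V : Type*} [Fintype V] [Nonempty V]
    (M : Matrix V V ℝ) (hM : M.IsHermitian) (c : ℝ) (x : V → ℝ) (hx : x ≠ 0)
    (h : c * (∑ v, x v * x v) < ∑ v, M.mulVec x v * x v) :
    c < specRad M := by
  classical
  set T : EuclideanSpace ℝ V →ₗ[ℝ] EuclideanSpace ℝ V := Matrix.toEuclideanLin M with hT
  have hTsymm : T.IsSymmetric := Matrix.isHermitian_iff_isSymmetric.mp hM
  have key := hTsymm.hasEigenvalue_iSup_of_finiteDimensional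
  set μ : ℝ := ⨆ y : {y : EuclideanSpace ℝ V // y ≠ 0},
      RCLike.re (⟪T y, y⟫_ℝ) / ‖(y : EuclideanSpace ℝ V)‖ ^ 2 with hμ
  have hμmem : μ ∈ spectrum ℝ M := by
    rw [← Matrix.spectrum_toEuclideanLin (A := M)]
    have := Module.End.hasEigenvalue_iff_mem_spectrum.mp key
    simpa using this
  have hbdd : BddAbove (spectrum ℝ M) := (Matrix.finite_spectrum M).bddAbove
  have hμle : μ ≤ specRad M := le_csSup hbdd hμmem
  set T' := LinearMap.toContinuousLinearMap T with hT'
  have hbdd2 : BddAbove (Set.range fun y : {y : EuclideanSpace ℝ V // y ≠ 0} =>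
      RCLike.re (⟪T y, y⟫_ℝ) / ‖(y : EuclideanSpace ℝ V)‖ ^ 2) := by
    refine ⟨‖T'‖, ?_⟩
    rintro r ⟨⟨y, hy⟩, rfl⟩
    have hy0 : (0:ℝ) < ‖y‖ := norm_pos_iff.mpr hy
    have hy2 : (0:ℝ) < ‖y‖ ^ 2 := by positivity
    rw [div_le_iff₀ hy2]
    calc RCLike.re (⟪T y, y⟫_ℝ) ≤ ‖T y‖ * ‖y‖ := by
          simpa using real_inner_le_norm (T y) y
      _ = ‖T' y‖ * ‖y‖ := rfl
      _ ≤ (‖T'‖ * ‖y‖) * ‖y‖ := by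
          have := T'.le_opNorm y
          nlinarith [norm_nonneg y]
      _ = ‖T'‖ * ‖y‖ ^ 2 := by ring
  let x' : EuclideanSpace ℝ V := WithLp.toLp 2 x
  have hx' : x' ≠ 0 := by
    intro h0
    exact hx (by simpa [x'] using congrArg WithLp.ofLp h0)
  have hray : c < RCLike.re (⟪T x', x'⟫_ℝ) / ‖x'‖ ^ 2 := by
    have hx0 : (0:ℝ) < ‖x'‖ := norm_pos_iff.mpr hx'
    have hn2 : (0:ℝ) < ‖x'‖ ^ 2 := by positivity
    rw [lt_div_iff₀ hn2]
    have e1 : ‖x'‖ ^ 2 = ∑ v, x v * x v := by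
      rw [← real_inner_self_eq_norm_sq]
      simp only [x', PiLp.inner_apply, RCLike.inner_apply, conj_trivial, WithLp.ofLp_toLp]
    have e2 : RCLike.re (⟪T x', x'⟫_ℝ) = ∑ v, M.mulVec x v * x v := by
      simp only [hT, Matrix.toEuclideanLin_apply, PiLp.inner_apply, RCLike.inner_apply]
      simp [x', mul_comm]
    rw [e1, e2]
    exact h
  have hle : RCLike.re (⟪T x', x'⟫_ℝ) / ‖x'‖ ^ 2 ≤ μ := le_ciSup hbdd2 ⟨x', hx'⟩
  linarith

section AdjAux
variable {s t : ℕ} {parts : Fin t → ℕ}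

lemma adj_inl_iff (a : Fin s) (u : Fin s ⊕ (Σ i : Fin t, Fin (parts i))) :
    (cliqueJoin s parts).Adj (Sum.inl a) u ↔ u ≠ Sum.inl a := by
  constructor
  · rintro ⟨h, -⟩; exact h.symm
  · intro h; exact ⟨h.symm, Or.inl rfl⟩

lemma adj_inr_inl (i : Fin t) (j : Fin (parts i)) (a : Fin s) :
    (cliqueJoin s parts).Adj (Sum.inr ⟨i, j⟩) (Sum.inl a) :=
  ⟨by simp, Or.inr (Or.inl rfl)⟩

lemma adj_inr_inr_same (i : Fin t) (j j' : Fin (parts i)) :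
    (cliqueJoin s parts).Adj (Sum.inr ⟨i, j⟩) (Sum.inr ⟨i, j'⟩) ↔ j ≠ j' := by
  constructor
  · rintro ⟨h, -⟩
    intro hj; exact h (by rw [hj])
  · intro h
    refine ⟨?_, Or.inr (Or.inr rfl)⟩
    intro hh
    injection hh with h1
    injection h1 with h2 h3
    exact h h3

lemma not_adj_inr_inr (i i' : Fin t) (j : Fin (parts i)) (j' : Fin (parts i'))
    (h : i ≠ i') : ¬ (cliqueJoin s parts).Adj (Sum.inr ⟨i, j⟩) (Sum.inr ⟨i', j'⟩) := by
  rintro ⟨-, h1 | h1 | h1⟩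
  · simp [cellOf] at h1
  · simp [cellOf] at h1
  · exact h (by simpa [cellOf] using h1)

end AdjAux

section SumAux
variable {δ n : ℕ}

/-- the parts function of the extremal graph -/
abbrev Pt (δ n : ℕ) : Fin δ → ℕ := fun i => if (i : ℕ) = 0 then n - 2*δ + 1 else 1

/-- weight function of shape `(p, q, r)` -/
def Wt (δ n : ℕ) (p q r : ℝ) : (Fin δ ⊕ Σ i : Fin δ, Fin (Pt δ n i)) → ℝ
  | Sum.inl _ => p
  | Sum.inr ⟨i, _⟩ => if (i : ℕ) = 0 then q else r

lemma sum_ite_zero_fin (hδ : 0 < δ) (A B : ℝ) :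
    ∑ i : Fin δ, (if (i : ℕ) = 0 then A else B) = A + ((δ : ℝ) - 1) * B := by
  have h : ∀ i : Fin δ, (if (i : ℕ) = 0 then A else B)
      = B + (if i = (⟨0, hδ⟩ : Fin δ) then A - B else 0) := by
    intro i
    by_cases h : (i : ℕ) = 0
    · rw [if_pos h, if_pos (by exact Fin.ext h)]; ring
    · rw [if_neg h, if_neg (by intro hh; exact h (by rw [hh])), add_zero]
  rw [Finset.sum_congr rfl (fun i _ => h i), Finset.sum_add_distrib, Finset.sum_const,
    Finset.sum_ite_eq' Finset.univ (⟨0, hδ⟩ : Fin δ) (fun _ => A - B),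
    if_pos (Finset.mem_univ _), Finset.card_univ, Fintype.card_fin, nsmul_eq_mul]
  ring

lemma sum_Wt (hδ : 0 < δ) (hn : 2*δ ≤ n) (p q r : ℝ) :
    ∑ v, Wt δ n p q r v = (δ : ℝ) * p + ((n : ℝ) - 2*δ + 1) * q + ((δ : ℝ) - 1) * r := by
  have hcast : ((n - 2*δ + 1 : ℕ) : ℝ) = (n : ℝ) - 2*δ + 1 := by
    push_cast [Nat.cast_sub hn]; ring
  rw [Fintype.sum_sum_type]
  rw [← Finset.univ_sigma_univ, Finset.sum_sigma]
  have h1 : ∑ a : Fin δ, Wt δ n p q r (Sum.inl a) = (δ : ℝ) * p := by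
    simp [Wt, Finset.sum_const, mul_comm]
  have h2 : ∀ i : Fin δ, (∑ j : Fin (Pt δ n i),
      Wt δ n p q r (Sum.inr ⟨i, j⟩)) = if (i : ℕ) = 0 then ((n : ℝ) - 2*δ + 1) * q else r := by
    intro i
    by_cases h : (i : ℕ) = 0
    · simp only [Wt, h, if_true, Finset.sum_const, Finset.card_univ, Fintype.card_fin,
        nsmul_eq_mul, Pt, hcast]
    · simp only [Wt, h, if_false, Finset.sum_const, Finset.card_univ, Fintype.card_fin,
        nsmul_eq_mul, Pt, Nat.cast_one, one_mul]
  rw [h1, Finset.sum_congr rfl (fun i _ => h2 i), sum_ite_zero_fin hδ]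
  ring

lemma adjSum_inl [inst : DecidableRel (cliqueJoin δ (Pt δ n)).Adj]
    (hδ : 0 < δ) (hn : 2*δ ≤ n) (p q r : ℝ) (a : Fin δ) :
    (∑ u, if (cliqueJoin δ (Pt δ n)).Adj (Sum.inl a) u then Wt δ n p q r u else 0)
      = ((δ:ℝ) - 1) * p + ((n:ℝ) - 2*δ + 1) * q + ((δ:ℝ) - 1) * r := by
  have h : ∀ u, (if (cliqueJoin δ (Pt δ n)).Adj (Sum.inl a) u then Wt δ n p q r u else 0)
      = Wt δ n p q r u - (if u = Sum.inl a then Wt δ n p q r u else 0) := by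
    intro u
    by_cases hu : u = Sum.inl a
    · subst hu
      rw [if_neg (fun hadj => ((adj_inl_iff (parts := Pt δ n) a _).mp hadj) rfl),
        if_pos rfl, sub_self]
    · rw [if_pos ((adj_inl_iff (parts := Pt δ n) a u).mpr hu), if_neg hu, sub_zero]
  rw [Finset.sum_congr rfl (fun u _ => h u), Finset.sum_sub_distrib,
    Finset.sum_ite_eq' Finset.univ (Sum.inl a) (Wt δ n p q r), if_pos (Finset.mem_univ _),
    sum_Wt hδ hn]
  show _ - Wt δ n p q r (Sum.inl a) = _
  rw [show Wt δ n p q r (Sum.inl a) = p from rfl]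
  ring

lemma adjSum_inr [inst : DecidableRel (cliqueJoin δ (Pt δ n)).Adj]
    (hδ : 0 < δ) (hn : 2*δ ≤ n) (p q r : ℝ) (i : Fin δ) (j : Fin (Pt δ n i)) :
    (∑ u, if (cliqueJoin δ (Pt δ n)).Adj (Sum.inr ⟨i, j⟩) u then Wt δ n p q r u else 0)
      = (δ:ℝ) * p + (if (i : ℕ) = 0 then ((n:ℝ) - 2*δ) * q else 0) := by
  have hcast : ((n - 2*δ + 1 : ℕ) : ℝ) = (n : ℝ) - 2*δ + 1 := by
    push_cast [Nat.cast_sub hn]; ring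
  rw [Fintype.sum_sum_type, ← Finset.univ_sigma_univ, Finset.sum_sigma]
  have h1 : ∑ a : Fin δ, (if (cliqueJoin δ (Pt δ n)).Adj (Sum.inr ⟨i,j⟩) (Sum.inl a)
      then Wt δ n p q r (Sum.inl a) else 0) = (δ:ℝ) * p := by
    rw [Finset.sum_congr rfl (fun a _ => if_pos (adj_inr_inl (parts := Pt δ n) i j a))]
    simp [Wt, mul_comm]
  have h2 : ∀ i' : Fin δ,
      (∑ j' : Fin (Pt δ n i'),
        if (cliqueJoin δ (Pt δ n)).Adj (Sum.inr ⟨i,j⟩) (Sum.inr ⟨i',j'⟩)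
          then Wt δ n p q r (Sum.inr ⟨i',j'⟩) else 0)
      = if i' = i
          then ((Pt δ n i : ℝ) - 1) * (if (i:ℕ) = 0 then q else r)
          else 0 := by
    intro i'
    by_cases hii : i' = i
    · subst hii
      rw [if_pos rfl]
      have h3 : ∀ j' : Fin (Pt δ n i'),
          (if (cliqueJoin δ (Pt δ n)).Adj (Sum.inr ⟨i',j⟩) (Sum.inr ⟨i',j'⟩)
            then Wt δ n p q r (Sum.inr ⟨i',j'⟩) else 0)
          = (if (i':ℕ) = 0 then q else r)
            - (if j' = j then (if (i':ℕ) = 0 then q else r) else 0) := by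
        intro j'
        by_cases hj : j' = j
        · subst hj
          rw [if_neg (fun hadj => ((adj_inr_inr_same (parts := Pt δ n) i' j' j').mp hadj) rfl),
            if_pos rfl, sub_self]
        · rw [if_pos ((adj_inr_inr_same (parts := Pt δ n) i' j j').mpr (Ne.symm hj)),
            if_neg hj, sub_zero]
          rfl
      rw [Finset.sum_congr rfl (fun j' _ => h3 j'), Finset.sum_sub_distrib, Finset.sum_const,
        Finset.sum_ite_eq' Finset.univ j _, if_pos (Finset.mem_univ _), Finset.card_univ,
        Fintype.card_fin, nsmul_eq_mul]
      ring
    · rw [if_neg hii, Finset.sum_eq_zero]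
      intro j' _
      exact if_neg (not_adj_inr_inr (parts := Pt δ n) i i' j j' (fun hh => hii hh.symm))
  rw [h1, Finset.sum_congr rfl (fun i' _ => h2 i'),
    Finset.sum_ite_eq' Finset.univ i _, if_pos (Finset.mem_univ _)]
  congr 1
  by_cases h : (i:ℕ) = 0
  · rw [if_pos h, if_pos h,
      show ((Pt δ n i : ℝ)) = ((n - 2*δ + 1 : ℕ) : ℝ) by rw [Pt]; rw [if_pos h], hcast]
    ring
  · rw [if_neg h, if_neg h, show ((Pt δ n i : ℝ)) = 1 by rw [Pt]; rw [if_neg h]; norm_num]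
    ring

lemma Wt_one : ∀ u, Wt δ n 1 1 1 u = 1 := by
  rintro (a | ⟨i, j⟩) <;> simp [Wt]

end SumAux

lemma degree_cast_real {V : Type*} [Fintype V] [DecidableEq V] (G : SimpleGraph V)
    [DecidableRel G.Adj] (v : V) :
    ((G.degree v : ℝ)) = ∑ u, (if G.Adj v u then (1:ℝ) else 0) := by
  rw [SimpleGraph.degree, SimpleGraph.neighborFinset_eq_filter]
  exact Finset.natCast_card_filter _ _

theorem rhoAlpha_extremalGraph_gt (α : ℝ) (hα0 : 0 ≤ α) (hα1 : α < 1)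
    (δ n : ℕ) (hδ : 2 ≤ δ) (hn : 2 * δ ≤ n) :
    (n : ℝ) - (δ : ℝ) < rhoAlpha α (cliqueJoin δ (fun i : Fin δ => if (i : ℕ) = 0 then n - 2 * δ + 1 else 1)) := by
  classical
  have hδ0 : 0 < δ := by omega
  have hd2 : (2:ℝ) ≤ (δ:ℝ) := by exact_mod_cast hδ
  have hn2d : (2:ℝ) * δ ≤ (n:ℝ) := by exact_mod_cast hn
  set m : ℝ := (n:ℝ) - δ with hm
  have hdm : (δ:ℝ) ≤ m := by rw [hm]; linarith
  have hmpos : (0:ℝ) < m := by linarith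
  have h1α : (0:ℝ) < 1 - α := by linarith
  set ε : ℝ := (δ:ℝ) * (1 - α) / m with hε
  have hεpos : 0 < ε := by
    apply div_pos _ hmpos
    positivity
  have hme : m * ε = (δ:ℝ) * (1 - α) := by
    rw [hε]; field_simp
  have hme2 : m * (ε * ε) = (δ:ℝ) * (1 - α) * ε := by
    rw [← hme]; ring
  set G := cliqueJoin δ (Pt δ n) with hG
  set x : (Fin δ ⊕ Σ i : Fin δ, Fin (Pt δ n i)) → ℝ := Wt δ n 1 1 ε with hxdef
  haveI : Nonempty (Fin δ ⊕ Σ i : Fin δ, Fin (Pt δ n i)) := ⟨Sum.inl ⟨0, hδ0⟩⟩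
  -- hermitian
  have hherm : (Aalpha α G).IsHermitian := by
    show (Aalpha α G)ᴴ = Aalpha α G
    letI : DecidableEq (Fin δ ⊕ (i : Fin δ) × Fin (Pt δ n i)) := Classical.decEq _
    simp only [Aalpha]
    rw [Matrix.conjTranspose_add, Matrix.conjTranspose_smul, Matrix.conjTranspose_smul,
      Matrix.conjTranspose_eq_transpose_of_trivial, Matrix.conjTranspose_eq_transpose_of_trivial,
      Matrix.diagonal_transpose, SimpleGraph.isSymm_adjMatrix, star_trivial, star_trivial]
  have hx : x ≠ 0 := by
    intro h0
    have h1 : x (Sum.inl ⟨0, hδ0⟩) = 0 := by rw [h0]; rfl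
    rw [hxdef] at h1
    norm_num [Wt] at h1
  -- mulVec expansion
  have hmulvec : ∀ v, (Aalpha α G).mulVec x v
      = α * (G.degree v : ℝ) * x v + (1 - α) * ∑ u, (if G.Adj v u then x u else 0) := by
    intro v
    simp only [Aalpha, Matrix.add_mulVec, Pi.add_apply, Matrix.smul_mulVec,
      Pi.smul_apply, Matrix.mulVec_diagonal, smul_eq_mul]
    congr 1
    · ring
    · congr 1
      rw [SimpleGraph.adjMatrix_mulVec_apply, SimpleGraph.neighborFinset_eq_filter,
        Finset.sum_filter]
  -- degrees
  have hdeg_inl : ∀ a : Fin δ, (G.degree (Sum.inl a) : ℝ) = (n:ℝ) - 1 := by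
    intro a
    rw [degree_cast_real]
    have h : ∀ u, (if G.Adj (Sum.inl a) u then (1:ℝ) else 0)
        = (if G.Adj (Sum.inl a) u then Wt δ n 1 1 1 u else 0) := by
      intro u; by_cases h : G.Adj (Sum.inl a) u <;> simp [h, Wt_one u]
    rw [Finset.sum_congr rfl (fun u _ => h u), adjSum_inl hδ0 hn]
    ring
  have hdeg_inr : ∀ (i : Fin δ) (j : Fin (Pt δ n i)), (G.degree (Sum.inr ⟨i, j⟩) : ℝ)
      = (δ:ℝ) + (if (i:ℕ) = 0 then (n:ℝ) - 2*δ else 0) := by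
    intro i j
    rw [degree_cast_real]
    have h : ∀ u, (if G.Adj (Sum.inr ⟨i,j⟩) u then (1:ℝ) else 0)
        = (if G.Adj (Sum.inr ⟨i,j⟩) u then Wt δ n 1 1 1 u else 0) := by
      intro u; by_cases h : G.Adj (Sum.inr ⟨i,j⟩) u <;> simp [h, Wt_one u]
    rw [Finset.sum_congr rfl (fun u _ => h u), adjSum_inr hδ0 hn]
    by_cases h : (i:ℕ) = 0 <;> simp [h]
  -- neighbor sums of x
  have hsum_inl : ∀ a : Fin δ, (∑ u, if G.Adj (Sum.inl a) u then x u else 0)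
      = m + ((δ:ℝ) - 1) * ε := by
    intro a
    rw [hxdef, adjSum_inl hδ0 hn, hm]
    ring
  have hsum_inr : ∀ (i : Fin δ) (j : Fin (Pt δ n i)),
      (∑ u, if G.Adj (Sum.inr ⟨i,j⟩) u then x u else 0)
      = (δ:ℝ) + (if (i:ℕ) = 0 then (n:ℝ) - 2*δ else 0) := by
    intro i j
    rw [hxdef, adjSum_inr hδ0 hn]
    by_cases h : (i:ℕ) = 0 <;> simp [h]
  -- the three values of (Mx) v * x v
  set P : ℝ := (α * ((n:ℝ) - 1) + (1 - α) * (m + ((δ:ℝ) - 1) * ε)) * 1 with hP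
  set Q0 : ℝ := (α * m + (1 - α) * m) * 1 with hQ0
  set R0 : ℝ := (α * (δ:ℝ) * ε + (1 - α) * (δ:ℝ)) * ε with hR0
  have hform : ∀ v, (Aalpha α G).mulVec x v * x v = Wt δ n P Q0 R0 v := by
    rintro (a | ⟨i, j⟩)
    · rw [hmulvec, hdeg_inl, hsum_inl]
      have hxv : x (Sum.inl a) = 1 := rfl
      rw [hxv]
      show _ = P
      rw [hP]; ring
    · rw [hmulvec, hdeg_inr, hsum_inr]
      by_cases h : (i:ℕ) = 0
      · have hxv : x (Sum.inr ⟨i,j⟩) = 1 := by rw [hxdef]; simp [Wt, h]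
        have hWt : Wt δ n P Q0 R0 (Sum.inr ⟨i,j⟩) = Q0 := by simp [Wt, h]
        rw [hxv, hWt, if_pos h, hQ0, hm]
        ring
      · have hxv : x (Sum.inr ⟨i,j⟩) = ε := by rw [hxdef]; simp [Wt, h]
        have hWt : Wt δ n P Q0 R0 (Sum.inr ⟨i,j⟩) = R0 := by simp [Wt, h]
        rw [hxv, hWt, if_neg h, hR0]
        ring
  have hform2 : ∀ v, x v * x v = Wt δ n 1 1 (ε * ε) v := by
    rintro (a | ⟨i, j⟩)
    · simp [hxdef, Wt]
    · by_cases h : (i:ℕ) = 0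
      · simp [hxdef, Wt, h]
      · simp [hxdef, Wt, h]
  -- the key inequality
  have main : m * (∑ v, x v * x v) < ∑ v, (Aalpha α G).mulVec x v * x v := by
    rw [Finset.sum_congr rfl (fun v _ => hform2 v), Finset.sum_congr rfl (fun v _ => hform v),
      sum_Wt hδ0 hn, sum_Wt hδ0 hn]
    have hn' : (n:ℝ) = m + δ := by rw [hm]; ring
    rw [hP, hQ0, hR0, hn']
    have hδ1 : (1:ℝ) ≤ (δ:ℝ) - 1 := by linarith
    have hδpos : (0:ℝ) < (δ:ℝ) := by linarith
    have e3 : ((δ:ℝ) - 1) * (m * (ε * ε)) = ((δ:ℝ) - 1) * ((δ:ℝ) * (1 - α) * ε) := by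
      rw [hme2]
    have hA : (0:ℝ) ≤ α * ((δ:ℝ) - 1) * (δ:ℝ) :=
      mul_nonneg (mul_nonneg hα0 (by linarith)) (le_of_lt hδpos)
    have hB : (0:ℝ) < ((δ:ℝ) - 1) * ((δ:ℝ) * (1 - α) * ε) :=
      mul_pos (by linarith) (mul_pos (mul_pos hδpos h1α) hεpos)
    have hC : (0:ℝ) ≤ ((δ:ℝ) - 1) * (α * (δ:ℝ) * (ε * ε)) :=
      mul_nonneg (by linarith)
        (mul_nonneg (mul_nonneg hα0 (le_of_lt hδpos))
          (mul_nonneg (le_of_lt hεpos) (le_of_lt hεpos)))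
    nlinarith [e3, hA, hB, hC]
  exact lt_specRad_of_rayleigh (Aalpha α G) hherm m x hx main
end
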